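/- Let N be a connected simple graph with leaf set X (vertices of degree 1) where |X| >= 2. Suppose there exist two leaves x and y with neighbors u and v respectively such that {u,v} is an edge of N and there is a path in N from u to v visiting all non-leaf vertices of N exactly once. Then N is treebased, i.e., N has a spanning tree whose set of degree-1 vertices equals X. -/

import Mathlib

open SimpleGraph

private lemma first_edge_of_ne {V : Type*} {G : SimpleGraph V} {s t : V}
    (q : G.Walk s t) (h : s ≠ t) : ∃ d, s(s, d) ∈ q.edges := by
  cases q with
  | nil => exact absurd rfl h
  | @cons _ m _ h' q' =>
    exact ⟨m, by rw [SimpleGraph.Walk.edges_cons]; exact List.mem_cons_self⟩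

private lemma cycle_two_edges {V : Type*} [DecidableEq V] {G : SimpleGraph V} {w : V}
    (c : G.Walk w w) (hc : c.IsCycle) :
    ∃ a b, a ≠ b ∧ s(w, a) ∈ c.edges ∧ s(w, b) ∈ c.edges := by
  cases c with
  | nil => exact absurd hc Walk.IsCycle.not_of_nil
  | @cons _ b _ h q =>
    rw [Walk.cons_isCycle_iff] at hc
    have hwb : w ≠ b := h.ne
    obtain ⟨d, hd⟩ := first_edge_of_ne q.reverse hwb
    rw [Walk.edges_reverse, List.mem_reverse] at hd
    have hdb : d ≠ b := by
      rintro rfl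
      exact hc.2 hd
    exact ⟨d, b, hdb, by simp [hd], by simp⟩

private lemma no_cycle_in_path {V : Type*} [DecidableEq V] {G : SimpleGraph V} {w : V} (c : G.Walk w w)
    (hc : c.IsCycle) :
    ∀ {s t : V} (p : G.Walk s t), p.IsPath → (∀ e ∈ c.edges, e ∈ p.edges) → False := by
  intro s t p
  induction p with
  | nil =>
    intro _ hsub
    have h3 := hc.three_le_length
    have hne : c.edges ≠ [] := by
      intro h
      rw [← Walk.length_edges, h] at h3
      simp at h3
    obtain ⟨e, he⟩ := List.exists_mem_of_ne_nil _ hne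
    simpa using hsub e he
  | @cons a b t' h q ih =>
    intro hp hsub
    rw [Walk.cons_isPath_iff] at hp
    by_cases hb : s(a, b) ∈ c.edges
    · have ha : a ∈ c.support := c.fst_mem_support_of_mem_edges hb
      obtain ⟨a1, a2, hne, h1, h2⟩ := cycle_two_edges (c.rotate a ha) (hc.rotate ha)
      have hmem : ∀ z, s(a, z) ∈ (c.rotate a ha).edges → z = b := by
        intro z hz
        rw [(c.rotate_edges a ha).mem_iff] at hz
        have h' := hsub _ hz
        rw [Walk.edges_cons, List.mem_cons] at h'
        rcases h' with h' | h'
        · rcases Sym2.eq_iff.mp h' with ⟨-, h2'⟩ | ⟨h1', -⟩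
          · exact h2'
          · exact absurd h1' h.ne
        · exact absurd (q.fst_mem_support_of_mem_edges h') hp.2
      exact hne ((hmem _ h1).trans (hmem _ h2).symm)
    · refine ih hp.1 fun e he => ?_
      have h' := hsub e he
      rw [Walk.edges_cons, List.mem_cons] at h'
      rcases h' with rfl | h'
      · exact absurd he hb
      · exact h'

theorem stmt7 {V : Type*} [Fintype V] [DecidableEq V] (N : SimpleGraph V)
    [DecidableRel N.Adj]
    (hconn : N.Connected)
    (hX : 2 ≤ {v : V | N.degree v = 1}.ncard)
    (x y u v : V) (hx : N.degree x = 1) (hy : N.degree y = 1) (hxy : x ≠ y)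
    (hux : N.Adj u x) (hvy : N.Adj v y) (huv : N.Adj u v)
    (p : N.Walk u v) (hp : p.IsPath)
    (hsupp : ∀ w : V, w ∈ p.support ↔ N.degree w ≠ 1) :
    ∃ T : SimpleGraph V, T ≤ N ∧ T.Connected ∧ T.IsAcyclic ∧
      ∀ w : V, ((T.neighborSet w).ncard = 1 ↔ N.degree w = 1) := by
  classical
  have hu_nl : N.degree u ≠ 1 := (hsupp u).1 p.start_mem_support
  have hv_nl : N.degree v ≠ 1 := (hsupp v).1 p.end_mem_support
  -- unique neighbor of a leaf
  have uniqueN : ∀ {w a b : V}, N.degree w = 1 → N.Adj w a → N.Adj w b → a = b := by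
    intro w a b hw ha hb
    have hcard : (N.neighborFinset w).card ≤ 1 := by
      rw [N.card_neighborFinset_eq_degree, hw]
    exact Finset.card_le_one.mp hcard _ ((N.mem_neighborFinset w a).2 ha)
      _ ((N.mem_neighborFinset w b).2 hb)
  -- a neighbor of a leaf is not a leaf
  have leaf_nbr_nl : ∀ {a b : V}, N.degree a = 1 → N.Adj a b → N.degree b ≠ 1 := by
    intro a b ha hab hb
    obtain ⟨r⟩ := hconn a u
    obtain ⟨q, hq⟩ := r.toPath
    have hau : a ≠ u := fun h => hu_nl (h ▸ ha)
    cases q with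
    | nil => exact hau rfl
    | @cons _ c _ h1 q1 =>
      have hcb : c = b := uniqueN ha h1 hab
      have hc1 : N.degree c = 1 := by rw [hcb]; exact hb
      have hca : N.Adj c a := by rw [hcb]; exact hab.symm
      have hcu : c ≠ u := fun h => hu_nl (h ▸ hc1)
      cases q1 with
      | nil => exact hcu rfl
      | @cons _ d _ h2 q2 =>
        have hda : d = a := uniqueN hc1 h2 hca
        have hnd := hq.support_nodup
        simp [Walk.support_cons] at hnd
        exact hnd.1.2 (hda ▸ q2.start_mem_support)
  -- the edge set of the tree
  set S : Set (Sym2 V) :=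
    {e | e ∈ p.edges} ∪ {e | ∃ a b, N.degree a = 1 ∧ N.Adj a b ∧ e = s(a, b)} with hSdef
  set T : SimpleGraph V := SimpleGraph.fromEdgeSet S with hTdef
  have hTadj : ∀ {a b : V}, T.Adj a b ↔ (s(a, b) ∈ S ∧ a ≠ b) := by
    intro a b; rw [hTdef, SimpleGraph.fromEdgeSet_adj]
  have hTN : T ≤ N := by
    intro a b hab
    rw [hTadj] at hab
    rcases hab.1 with he | ⟨a', b', ha', hab', he⟩
    · exact p.adj_of_mem_edges he
    · rcases Sym2.eq_iff.mp he with ⟨rfl, rfl⟩ | ⟨rfl, rfl⟩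
      · exact hab'
      · exact hab'.symm
  -- adjacency in T from a leaf implies adjacency in N, specifically pendant edge
  have hTleaf : ∀ {a b : V}, N.degree a = 1 → T.Adj a b → N.Adj a b := fun h1 h2 => hTN h2
  -- path edges are edges of T
  have hpe : ∀ e ∈ p.edges, e ∈ T.edgeSet := by
    intro e he
    rw [hTdef, SimpleGraph.edgeSet_fromEdgeSet]
    refine ⟨Or.inl he, ?_⟩
    exact SimpleGraph.not_isDiag_of_mem_edgeSet N (p.edges_subset_edgeSet he)
  set pT : T.Walk u v := p.transfer T hpe with hpTdef
  have hpT : pT.IsPath := hp.transfer hpe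
  have hpTe : pT.edges = p.edges := p.edges_transfer hpe
  have hpTs : pT.support = p.support := p.support_transfer hpe
  -- T-adjacency from membership in p.edges
  have hadjT : ∀ {a b : V}, s(a, b) ∈ p.edges → T.Adj a b := by
    intro a b hab
    exact (T.mem_edgeSet).1 (hpe _ hab)
  -- pendant adjacency
  have hpend : ∀ {a b : V}, N.degree a = 1 → N.Adj a b → T.Adj a b := by
    intro a b ha hab
    rw [hTadj]
    exact ⟨Or.inr ⟨a, b, ha, hab, rfl⟩, hab.ne⟩
  -- leaf vertices have a unique T-neighbor
  have huniqT : ∀ {w a b : V}, N.degree w = 1 → T.Adj w a → T.Adj w b → a = b := by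
    intro w a b hw ha hb
    exact uniqueN hw (hTleaf hw ha) (hTleaf hw hb)
  -- membership of leaves: a leaf is not on p
  have hleaf_not_supp : ∀ {a : V}, N.degree a = 1 → a ∉ p.support := by
    intro a ha hmem
    exact (hsupp a).1 hmem ha
  -- Connectivity
  have hreach : ∀ a : V, T.Reachable a u := by
    intro a
    by_cases hnl : N.degree a = 1
    · obtain ⟨b, hb⟩ : ∃ b, N.Adj a b := by
        rw [← N.degree_pos_iff_exists_adj, hnl]; norm_num
      have hb_nl : N.degree b ≠ 1 := leaf_nbr_nl hnl hb
      have hbs : b ∈ pT.support := by rw [hpTs]; exact (hsupp b).2 hb_nl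
      have h1 : T.Reachable b u := ⟨(pT.takeUntil b hbs).reverse⟩
      exact (SimpleGraph.Adj.reachable (hpend hnl hb)).trans h1
    · have has : a ∈ pT.support := by rw [hpTs]; exact (hsupp a).2 hnl
      exact ⟨(pT.takeUntil a has).reverse⟩
  have hTconn : T.Connected := by
    rw [SimpleGraph.connected_iff]
    exact ⟨fun a b => (hreach a).trans (hreach b).symm, ⟨u⟩⟩
  -- Acyclicity
  have hTacyc : T.IsAcyclic := by
    intro w c hc
    -- step 1: no leaf is on c
    have hstep1 : ∀ a ∈ c.support, N.degree a ≠ 1 := by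
      intro a hac hal
      obtain ⟨a1, a2, hne, h1, h2⟩ := cycle_two_edges (c.rotate a hac) (hc.rotate hac)
      exact hne (huniqT hal (c.adj_of_mem_edges ((c.rotate_edges a hac).mem_iff.mp h1))
        (c.adj_of_mem_edges ((c.rotate_edges a hac).mem_iff.mp h2)))
    -- step 2: all edges of c are path edges
    have hstep2 : ∀ e ∈ c.edges, e ∈ pT.edges := by
      intro e he
      have heT : e ∈ T.edgeSet := c.edges_subset_edgeSet he
      rw [hTdef, SimpleGraph.edgeSet_fromEdgeSet] at heT
      rcases heT.1 with h' | ⟨a, b, ha, hab, rfl⟩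
      · rw [hpTe]; exact h'
      · exact absurd ha (hstep1 a (c.fst_mem_support_of_mem_edges he))
    exact no_cycle_in_path c hc pT hpT hstep2
  refine ⟨T, hTN, hTconn, hTacyc, ?_⟩
  -- degree condition
  intro w
  constructor
  · -- contrapositive: if w is not a leaf, it has ≥ 2 distinct T-neighbors
    intro hcard
    by_contra hnl
    have hws : w ∈ pT.support := by rw [hpTs]; exact (hsupp w).2 hnl
    have h2n : ∃ a b, a ∈ T.neighborSet w ∧ b ∈ T.neighborSet w ∧ a ≠ b := by
      by_cases hwu : w = u
      · subst hwu
        have hnx : T.Adj w x := (hpend hx hux.symm).symm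
        obtain ⟨b, hb⟩ := first_edge_of_ne pT huv.ne
        have hnb : T.Adj w b := pT.adj_of_mem_edges hb
        have hbs : b ∈ pT.support := pT.snd_mem_support_of_mem_edges hb
        have hbx : b ≠ x := by
          rintro rfl
          exact hleaf_not_supp hx (hpTs ▸ hbs)
        exact ⟨x, b, hnx, hnb, fun h => hbx h.symm⟩
      · by_cases hwv : w = v
        · subst hwv
          have hny : T.Adj w y := (hpend hy hvy.symm).symm
          obtain ⟨b, hb⟩ := first_edge_of_ne pT.reverse hwu
          rw [Walk.edges_reverse, List.mem_reverse] at hb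
          have hnb : T.Adj w b := pT.adj_of_mem_edges hb
          have hbs : b ∈ pT.support := pT.snd_mem_support_of_mem_edges hb
          have hby : b ≠ y := by
            rintro rfl
            exact hleaf_not_supp hy (hpTs ▸ hbs)
          exact ⟨y, b, hny, hnb, fun h => hby h.symm⟩
        · -- interior vertex
          set q1 := pT.takeUntil w hws with hq1def
          set q2 := pT.dropUntil w hws with hq2def
          obtain ⟨a, ha⟩ := first_edge_of_ne q1.reverse hwu
          rw [Walk.edges_reverse, List.mem_reverse] at ha
          obtain ⟨b, hb⟩ := first_edge_of_ne q2 hwv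
          have hspec : q1.append q2 = pT := pT.take_spec hws
          have hnodup : (q1.edges ++ q2.edges).Nodup := by
            rw [← Walk.edges_append, hspec]
            exact hpT.isTrail.edges_nodup
          have hab : a ≠ b := by
            rintro rfl
            have hd := List.disjoint_of_nodup_append hnodup
            exact hd ha hb
          have hna : T.Adj w a := q1.adj_of_mem_edges ha
          have hnb : T.Adj w b := q2.adj_of_mem_edges hb
          exact ⟨a, b, hna, hnb, hab⟩
    obtain ⟨a, b, ha, hb, hab⟩ := h2n
    have : 1 < (T.neighborSet w).ncard := by
      rw [Set.one_lt_ncard_iff (Set.toFinite _)]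
      exact ⟨a, b, ha, hb, hab⟩
    omega
  · intro hw
    obtain ⟨z, hz⟩ : ∃ z, N.Adj w z := by
      rw [← N.degree_pos_iff_exists_adj, hw]; norm_num
    have : T.neighborSet w = {z} := by
      ext a
      simp only [SimpleGraph.mem_neighborSet, Set.mem_singleton_iff]
      constructor
      · intro h
        exact uniqueN hw (hTleaf hw h) hz
      · rintro rfl
        exact hpend hw hz
    rw [this, Set.ncard_singleton]
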